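/- (Left residuation for ↓) Let y be a state variable not occurring in α or β. For any Kripke model M and assignment g: M,g ⊩ α ≤ ↓x.β iff for every world w ∈ W, the inequality (A(y → α) ∧ y) ≤ β[y/x] holds in (M, g[y↦w]). -/

import Mathlib

inductive Form where
  | prop : ℕ → Form
  | nom : ℕ → Form
  | svar : ℕ → Form
  | bot : Form
  | top : Form
  | neg : Form → Form
  | and : Form → Form → Form
  | or : Form → Form → Form
  | imp : Form → Form → Form
  | box : Form → Form
  | dia : Form → Form
  | atN : ℕ → Form → Form
  | atS : ℕ → Form → Form
  | bind : ℕ → Form → Form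
  | bbox : Form → Form
  | bdia : Form → Form
  | glA : Form → Form
  | glE : Form → Form
  | sall : ℕ → Form → Form
  | sex : ℕ → Form → Form

structure Model (W : Type) where
  R : W → W → Prop
  Vp : ℕ → W → Prop
  Vn : ℕ → W

def upd {W : Type} (g : ℕ → W) (x : ℕ) (w : W) : ℕ → W :=
  fun y => if y = x then w else g y

def sat {W : Type} (M : Model W) : (ℕ → W) → W → Form → Prop
  | _, w, .prop p => M.Vp p w
  | _, w, .nom i => M.Vn i = w
  | g, w, .svar x => g x = w
  | _, _, .bot => False
  | _, _, .top => True
  | g, w, .neg φ => ¬ sat M g w φ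
  | g, w, .and φ ψ => sat M g w φ ∧ sat M g w ψ
  | g, w, .or φ ψ => sat M g w φ ∨ sat M g w ψ
  | g, w, .imp φ ψ => sat M g w φ → sat M g w ψ
  | g, w, .box φ => ∀ v, M.R w v → sat M g v φ
  | g, w, .dia φ => ∃ v, M.R w v ∧ sat M g v φ
  | g, _, .atN i φ => sat M g (M.Vn i) φ
  | g, _, .atS x φ => sat M g (g x) φ
  | g, w, .bind x φ => sat M (upd g x w) w φ
  | g, w, .bbox φ => ∀ v, M.R v w → sat M g v φ
  | g, w, .bdia φ => ∃ v, M.R v w ∧ sat M g v φ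
  | g, _, .glA φ => ∀ v, sat M g v φ
  | g, _, .glE φ => ∃ v, sat M g v φ
  | g, w, .sall x φ => ∀ v, sat M (upd g x v) w φ
  | g, w, .sex x φ => ∃ v, sat M (upd g x v) w φ

/-- The inequality φ ≤ ψ holds in (M,g). -/
def holdsIneq {W : Type} (M : Model W) (g : ℕ → W) (φ ψ : Form) : Prop :=
  ∀ w, sat M g w φ → sat M g w ψ

/-- Frame validity of an inequality. -/
def validIneq {W : Type} (R : W → W → Prop) (φ ψ : Form) : Prop :=
  ∀ (Vp : ℕ → W → Prop) (Vn : ℕ → W) (g : ℕ → W),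
    holdsIneq ⟨R, Vp, Vn⟩ g φ ψ

/-- The state variable `x` occurs in the formula (free or bound). -/
def svarIn (x : ℕ) : Form → Prop
  | .prop _ => False
  | .nom _ => False
  | .svar y => y = x
  | .bot => False
  | .top => False
  | .neg φ => svarIn x φ
  | .and φ ψ => svarIn x φ ∨ svarIn x ψ
  | .or φ ψ => svarIn x φ ∨ svarIn x ψ
  | .imp φ ψ => svarIn x φ ∨ svarIn x ψ
  | .box φ => svarIn x φ
  | .dia φ => svarIn x φ
  | .atN _ φ => svarIn x φ
  | .atS y φ => y = x ∨ svarIn x φ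
  | .bind y φ => y = x ∨ svarIn x φ
  | .bbox φ => svarIn x φ
  | .bdia φ => svarIn x φ
  | .glA φ => svarIn x φ
  | .glE φ => svarIn x φ
  | .sall y φ => y = x ∨ svarIn x φ
  | .sex y φ => y = x ∨ svarIn x φ

/-- Substitution of the state variable `y` for free occurrences of the state variable `x`. -/
def substSvar (x y : ℕ) : Form → Form
  | .prop q => .prop q
  | .nom i => .nom i
  | .svar z => if z = x then .svar y else .svar z
  | .bot => .bot
  | .top => .top
  | .neg φ => .neg (substSvar x y φ)
  | .and φ ψ => .and (substSvar x y φ) (substSvar x y ψ)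
  | .or φ ψ => .or (substSvar x y φ) (substSvar x y ψ)
  | .imp φ ψ => .imp (substSvar x y φ) (substSvar x y ψ)
  | .box φ => .box (substSvar x y φ)
  | .dia φ => .dia (substSvar x y φ)
  | .atN i φ => .atN i (substSvar x y φ)
  | .atS z φ => if z = x then .atS y (substSvar x y φ) else .atS z (substSvar x y φ)
  | .bind z φ => if z = x then .bind z φ else .bind z (substSvar x y φ)
  | .bbox φ => .bbox (substSvar x y φ)
  | .bdia φ => .bdia (substSvar x y φ)
  | .glA φ => .glA (substSvar x y φ)
  | .glE φ => .glE (substSvar x y φ)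
  | .sall z φ => if z = x then .sall z φ else .sall z (substSvar x y φ)
  | .sex z φ => if z = x then .sex z φ else .sex z (substSvar x y φ)

theorem upd_ne {W : Type} (g : ℕ → W) {a b : ℕ} (h : b ≠ a) (v : W) :
    upd g a v b = g b := by simp [upd, h]

theorem upd_comm' {W : Type} (g : ℕ → W) {a b : ℕ} (h : ¬ a = b) (v w : W) :
    upd (upd g a v) b w = upd (upd g b w) a v := by
  funext u
  by_cases h1 : u = b
  · subst h1; simp [upd, Ne.symm h]
  · by_cases h2 : u = a <;> simp [upd, h1, h2, h]

theorem sat_agree {W : Type} (M : Model W) (φ : Form) :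
    ∀ (g g' : ℕ → W) (w : W), (∀ z, svarIn z φ → g z = g' z) →
      (sat M g w φ ↔ sat M g' w φ) := by
  induction φ with
  | svar z => intro g g' w h; simp [sat, h z rfl]
  | neg φ ih => intro g g' w h; simp [sat, ih g g' w h]
  | and φ ψ ih1 ih2 =>
      intro g g' w h
      simp [sat, ih1 g g' w (fun z hz => h z (Or.inl hz)),
        ih2 g g' w (fun z hz => h z (Or.inr hz))]
  | or φ ψ ih1 ih2 =>
      intro g g' w h
      simp [sat, ih1 g g' w (fun z hz => h z (Or.inl hz)),
        ih2 g g' w (fun z hz => h z (Or.inr hz))]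
  | imp φ ψ ih1 ih2 =>
      intro g g' w h
      simp [sat, ih1 g g' w (fun z hz => h z (Or.inl hz)),
        ih2 g g' w (fun z hz => h z (Or.inr hz))]
  | box φ ih =>
      intro g g' w h
      simp only [sat]
      exact forall_congr' fun v => imp_congr_right fun _ => ih g g' v h
  | dia φ ih =>
      intro g g' w h
      simp only [sat]
      exact exists_congr fun v => and_congr_right fun _ => ih g g' v h
  | atN i φ ih => intro g g' w h; exact ih g g' _ h
  | atS z φ ih =>
      intro g g' w h
      have hz : g z = g' z := h z (Or.inl rfl)
      simp only [sat, hz]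
      exact ih g g' _ fun u hu => h u (Or.inr hu)
  | bind z φ ih =>
      intro g g' w h
      simp only [sat]
      apply ih
      intro u hu
      by_cases huz : u = z
      · simp [upd, huz]
      · simp [upd, huz]; exact h u (Or.inr hu)
  | bbox φ ih =>
      intro g g' w h
      simp only [sat]
      exact forall_congr' fun v => imp_congr_right fun _ => ih g g' v h
  | bdia φ ih =>
      intro g g' w h
      simp only [sat]
      exact exists_congr fun v => and_congr_right fun _ => ih g g' v h
  | glA φ ih =>
      intro g g' w h
      simp only [sat]
      exact forall_congr' fun v => ih g g' v h
  | glE φ ih =>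
      intro g g' w h
      simp only [sat]
      exact exists_congr fun v => ih g g' v h
  | sall z φ ih =>
      intro g g' w h
      simp only [sat]
      refine forall_congr' fun v => ih _ _ _ ?_
      intro u hu
      by_cases huz : u = z
      · simp [upd, huz]
      · simp [upd, huz]; exact h u (Or.inr hu)
  | sex z φ ih =>
      intro g g' w h
      simp only [sat]
      refine exists_congr fun v => ih _ _ _ ?_
      intro u hu
      by_cases huz : u = z
      · simp [upd, huz]
      · simp [upd, huz]; exact h u (Or.inr hu)
  | _ => intro g g' w h; simp [sat]

theorem sat_subst {W : Type} (M : Model W) (φ : Form) :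
    ∀ (x y : ℕ) (g : ℕ → W) (w : W), ¬ svarIn y φ →
      (sat M g w (substSvar x y φ) ↔ sat M (upd g x (g y)) w φ) := by
  induction φ with
  | svar z =>
      intro x y g w hy
      simp only [svarIn] at hy
      by_cases hz : z = x <;> simp [substSvar, sat, upd, hz]
  | neg φ ih => intro x y g w hy; simp [substSvar, sat, ih x y g w hy]
  | and φ ψ ih1 ih2 =>
      intro x y g w hy
      simp only [svarIn, not_or] at hy
      simp [substSvar, sat, ih1 x y g w hy.1, ih2 x y g w hy.2]
  | or φ ψ ih1 ih2 =>
      intro x y g w hy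
      simp only [svarIn, not_or] at hy
      simp [substSvar, sat, ih1 x y g w hy.1, ih2 x y g w hy.2]
  | imp φ ψ ih1 ih2 =>
      intro x y g w hy
      simp only [svarIn, not_or] at hy
      simp [substSvar, sat, ih1 x y g w hy.1, ih2 x y g w hy.2]
  | box φ ih =>
      intro x y g w hy
      simp only [substSvar, sat]
      exact forall_congr' fun v => imp_congr_right fun _ => ih x y g v hy
  | dia φ ih =>
      intro x y g w hy
      simp only [substSvar, sat]
      exact exists_congr fun v => and_congr_right fun _ => ih x y g v hy
  | atN i φ ih => intro x y g w hy; exact ih x y g _ hy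
  | atS z φ ih =>
      intro x y g w hy
      simp only [svarIn, not_or] at hy
      by_cases hz : z = x
      · simp only [substSvar, hz, if_pos rfl, sat]
        have : (upd g x (g y)) x = g y := by simp [upd]
        rw [this]
        exact ih x y g _ hy.2
      · simp only [substSvar, if_neg hz, sat]
        have : (upd g x (g y)) z = g z := by simp [upd, hz]
        rw [this]
        exact ih x y g _ hy.2
  | bind z φ ih =>
      intro x y g w hy
      simp only [svarIn, not_or] at hy
      by_cases hz : z = x
      · subst hz
        simp only [substSvar, if_pos rfl, ↓reduceIte, sat]
        have e : upd (upd g z (g y)) z w = upd g z w := by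
          funext u; by_cases h : u = z <;> simp [upd, h]
        rw [e]
      · simp only [substSvar, if_neg hz, sat]
        have h1 := ih x y (upd g z w) w hy.2
        have hyz : y ≠ z := fun h => hy.1 h.symm
        have e : upd (upd g z w) x ((upd g z w) y) = upd (upd g x (g y)) z w := by
          rw [upd_ne g hyz w, upd_comm' g hz w (g y)]
        rw [e] at h1
        exact h1
  | bbox φ ih =>
      intro x y g w hy
      simp only [substSvar, sat]
      exact forall_congr' fun v => imp_congr_right fun _ => ih x y g v hy
  | bdia φ ih =>
      intro x y g w hy
      simp only [substSvar, sat]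
      exact exists_congr fun v => and_congr_right fun _ => ih x y g v hy
  | glA φ ih =>
      intro x y g w hy
      simp only [substSvar, sat]
      exact forall_congr' fun v => ih x y g v hy
  | glE φ ih =>
      intro x y g w hy
      simp only [substSvar, sat]
      exact exists_congr fun v => ih x y g v hy
  | sall z φ ih =>
      intro x y g w hy
      simp only [svarIn, not_or] at hy
      by_cases hz : z = x
      · subst hz
        simp only [substSvar, if_pos rfl, sat]
        refine forall_congr' fun v => ?_
        have e : upd (upd g z (g y)) z v = upd g z v := by
          funext u; by_cases h : u = z <;> simp [upd, h]
        rw [e]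
      · simp only [substSvar, if_neg hz, sat]
        refine forall_congr' fun v => ?_
        have h1 := ih x y (upd g z v) w hy.2
        have hyz : y ≠ z := fun h => hy.1 h.symm
        have e : upd (upd g z v) x ((upd g z v) y) = upd (upd g x (g y)) z v := by
          rw [upd_ne g hyz v, upd_comm' g hz v (g y)]
        rw [e] at h1
        exact h1
  | sex z φ ih =>
      intro x y g w hy
      simp only [svarIn, not_or] at hy
      by_cases hz : z = x
      · subst hz
        simp only [substSvar, if_pos rfl, sat]
        refine exists_congr fun v => ?_
        have e : upd (upd g z (g y)) z v = upd g z v := by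
          funext u; by_cases h : u = z <;> simp [upd, h]
        rw [e]
      · simp only [substSvar, if_neg hz, sat]
        refine exists_congr fun v => ?_
        have h1 := ih x y (upd g z v) w hy.2
        have hyz : y ≠ z := fun h => hy.1 h.symm
        have e : upd (upd g z v) x ((upd g z v) y) = upd (upd g x (g y)) z v := by
          rw [upd_ne g hyz v, upd_comm' g hz v (g y)]
        rw [e] at h1
        exact h1
  | _ => intro x y g w hy; simp [substSvar, sat]

theorem left_residuation_downarrow {W : Type} (M : Model W) (g : ℕ → W)
    (x y : ℕ) (α β : Form) (hyα : ¬ svarIn y α) (hyβ : ¬ svarIn y β) :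
    holdsIneq M g α (.bind x β) ↔
      ∀ w : W, holdsIneq M (upd g y w)
        (.and (.glA (.imp (.svar y) α)) (.svar y)) (substSvar x y β) := by
  have keyβ : ∀ w : W, sat M (upd g y w) w (substSvar x y β) ↔ sat M (upd g x w) w β := by
    intro w
    rw [sat_subst M β x y (upd g y w) w hyβ]
    have hyy : (upd g y w) y = w := by simp [upd]
    rw [hyy]
    apply sat_agree
    intro z hz
    have hzy : z ≠ y := fun h => hyβ (h ▸ hz)
    by_cases hzx : z = x <;> simp [upd, hzx, hzy]
  constructor
  · intro h w v hv
    obtain ⟨hA, hy⟩ := hv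
    have hyv : (upd g y w) y = v := hy
    have hwv : w = v := by simpa [upd] using hyv
    subst hwv
    have hα : sat M (upd g y w) w α := hA w (by simp [sat, upd])
    have hα' : sat M g w α := by
      rw [sat_agree M α (upd g y w) g w ?_] at hα
      · exact hα
      · intro z hz
        have hzy : z ≠ y := fun h => hyα (h ▸ hz)
        simp [upd, hzy]
    have hb := h w hα'
    rw [keyβ w]
    exact hb
  · intro h v hv
    have hA : sat M (upd g y v) v (.and (.glA (.imp (.svar y) α)) (.svar y)) := by
      refine ⟨?_, by simp [upd, sat]⟩
      intro u hu
      have huv : u = v := by simpa [sat, upd] using hu.symm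
      subst huv
      rw [sat_agree M α (upd g y u) g u ?_]
      · exact hv
      · intro z hz
        have hzy : z ≠ y := fun h => hyα (h ▸ hz)
        simp [upd, hzy]
    have := h v v hA
    rw [keyβ v] at this
    exact this
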